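/- For each integer n ≥ 2 and all r ∈ (0,1), h_n'(r) = (2^{n+1}/r) ∫₀^r s(-log s)^{n-1} ds; in particular h_n'(r) > 0, so h_n is strictly increasing on (0,1). -/

import Mathlib

open Real Filter Set intervalIntegral MeasureTheory Finset

/-- The coefficients `a_{n,k} = (-2)^k (n!/k! - (n-1)!/(k-1)!)` for `k ≥ 1`, `a_{n,0} = n!`. -/
noncomputable def coefA (n k : ℕ) : ℝ :=
  if k = 0 then (n.factorial : ℝ)
  else (-2 : ℝ) ^ k * ((n.factorial : ℝ) / (k.factorial : ℝ)
    - ((n - 1).factorial : ℝ) / ((k - 1).factorial : ℝ))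

/-- `h_n(r) = r²(a_{n,n-1} log^{n-1} r + ⋯ + a_{n,1} log r + a_{n,0})`. -/
noncomputable def hFun (n : ℕ) (r : ℝ) : ℝ :=
  r ^ 2 * ∑ k ∈ Finset.range n, coefA n k * (Real.log r) ^ k

/-- Antiderivative of `s ↦ s (-log s)^m`, defined recursively. -/
noncomputable def auxG : ℕ → ℝ → ℝ
  | 0, r => r ^ 2 / 2
  | (m+1), r => r ^ 2 * (-Real.log r) ^ (m+1) / 2 + ((m : ℝ) + 1) / 2 * auxG m r

lemma auxG_zero (m : ℕ) : auxG m 0 = 0 := by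
  induction m with
  | zero => simp [auxG]
  | succ m ih => simp [auxG, ih]

lemma auxG_hasDerivAt (m : ℕ) {r : ℝ} (hr : 0 < r) :
    HasDerivAt (auxG m) (r * (-Real.log r) ^ m) r := by
  induction m with
  | zero =>
    have h : HasDerivAt (fun r : ℝ => r ^ 2 / 2) (r * (-Real.log r) ^ 0) r := by
      simpa using (hasDerivAt_pow 2 r).div_const 2
    exact h.congr_of_eventuallyEq (by filter_upwards with y; simp [auxG])
  | succ m ih =>
    have hlog : HasDerivAt (fun y : ℝ => -Real.log y) (-r⁻¹) r :=
      (Real.hasDerivAt_log hr.ne').neg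
    have hpow : HasDerivAt (fun y : ℝ => (-Real.log y) ^ (m + 1))
        (((m : ℝ) + 1) * (-Real.log r) ^ m * (-r⁻¹)) r := by
      have := (hasDerivAt_pow (m + 1) (-Real.log r)).comp r hlog
      simpa [Function.comp_def] using this
    have h1 : HasDerivAt (fun y : ℝ => y ^ 2 * (-Real.log y) ^ (m + 1) / 2 +
        ((m : ℝ) + 1) / 2 * auxG m y)
        ((2 * r ^ 1 * (-Real.log r) ^ (m + 1) +
          r ^ 2 * (((m : ℝ) + 1) * (-Real.log r) ^ m * (-r⁻¹))) / 2 +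
          ((m : ℝ) + 1) / 2 * (r * (-Real.log r) ^ m)) r :=
      (((hasDerivAt_pow 2 r).mul hpow).div_const 2).add (ih.const_mul _)
    have h2 : HasDerivAt (fun y : ℝ => y ^ 2 * (-Real.log y) ^ (m + 1) / 2 +
        ((m : ℝ) + 1) / 2 * auxG m y) (r * (-Real.log r) ^ (m + 1)) r := by
      convert h1 using 1
      field_simp
      ring
    exact h2.congr_of_eventuallyEq (by filter_upwards with y; simp [auxG])

lemma tendsto_pow_mul_neg_log_pow (p j : ℕ) (hp : 1 ≤ p) :
    Tendsto (fun r : ℝ => r ^ p * (-Real.log r) ^ j) (nhdsWithin 0 (Set.Ioi 0)) (nhds 0) := by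
  have h1 : Tendsto (fun t : ℝ => t ^ j * Real.exp (-t) * Real.exp (-t) ^ (p - 1))
      atTop (nhds 0) := by
    have := (tendsto_pow_mul_exp_neg_atTop_nhds_zero j).mul
      ((Real.tendsto_exp_atBot.comp tendsto_neg_atTop_atBot).pow (p - 1))
    simpa using this
  have h2 : Tendsto (fun r : ℝ => -Real.log r) (nhdsWithin 0 (Set.Ioi 0)) atTop :=
    tendsto_neg_atBot_atTop.comp Real.tendsto_log_nhdsGT_zero
  have h3 := h1.comp h2
  refine h3.congr' ?_
  filter_upwards [self_mem_nhdsWithin] with r (hr : 0 < r)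
  simp only [Function.comp_apply, neg_neg]
  rw [Real.exp_log hr, mul_assoc, show r * r ^ (p - 1) = r ^ p by
    rw [← pow_succ']; congr 1; omega]
  ring

/-- Turn a tendsto within `Ioi 0` plus value `0` at `0` into tendsto within `Ici 0`. -/
lemma tendsto_Ici_of_Ioi {f : ℝ → ℝ} (h : Tendsto f (nhdsWithin 0 (Set.Ioi 0)) (nhds 0))
    (h0 : f 0 = 0) : Tendsto f (nhdsWithin 0 (Set.Ici 0)) (nhds 0) := by
  rw [← Set.Ioi_insert, nhdsWithin_insert, tendsto_sup]
  refine ⟨?_, h⟩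
  have := tendsto_pure_nhds f 0
  rwa [h0] at this

lemma auxG_tendsto (m : ℕ) : Tendsto (auxG m) (nhdsWithin 0 (Set.Ioi 0)) (nhds 0) := by
  induction m with
  | zero =>
    have : Tendsto (fun r : ℝ => r ^ 2 / 2) (nhdsWithin 0 (Set.Ioi 0)) (nhds 0) := by
      have := ((continuous_pow 2).tendsto (0:ℝ)).div_const 2
      simpa using this.mono_left nhdsWithin_le_nhds
    exact this.congr (fun r => by simp [auxG])
  | succ m ih =>
    have h1 := (tendsto_pow_mul_neg_log_pow 2 (m+1) (by omega)).div_const 2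
    have h2 := ih.const_mul (((m : ℝ) + 1) / 2)
    have := h1.add h2
    simp only [zero_div, mul_zero, add_zero] at this
    exact this.congr (fun r => by simp [auxG])

lemma auxG_continuousOn (m : ℕ) {b : ℝ} : ContinuousOn (auxG m) (Set.Icc 0 b) := by
  intro x hx
  rcases eq_or_lt_of_le hx.1 with h0 | h0
  · have ht : Tendsto (auxG m) (nhdsWithin 0 (Set.Ici 0)) (nhds (auxG m 0)) := by
      rw [auxG_zero]
      exact tendsto_Ici_of_Ioi (auxG_tendsto m) (auxG_zero m)
    rw [← h0]
    exact (ht.mono_left (nhdsWithin_mono _ Set.Icc_subset_Ici_self)).congr (fun _ => rfl)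
  · exact ((auxG_hasDerivAt m h0).continuousAt).continuousWithinAt

lemma integrand_continuousOn (m : ℕ) {b : ℝ} :
    ContinuousOn (fun s : ℝ => s * (-Real.log s) ^ m) (Set.Icc 0 b) := by
  intro x hx
  rcases eq_or_lt_of_le hx.1 with h0 | h0
  · have ht : Tendsto (fun s : ℝ => s * (-Real.log s) ^ m) (nhdsWithin 0 (Set.Ici 0))
        (nhds ((fun s : ℝ => s * (-Real.log s) ^ m) 0)) := by
      have := tendsto_pow_mul_neg_log_pow 1 m le_rfl
      simp only [pow_one] at this
      simpa using tendsto_Ici_of_Ioi this (by simp)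
    rw [← h0]
    exact ht.mono_left (nhdsWithin_mono _ Set.Icc_subset_Ici_self)
  · have : ContinuousAt (fun s : ℝ => s * (-Real.log s) ^ m) x :=
      continuousAt_id.mul (((Real.continuousAt_log h0.ne').neg).pow m)
    exact this.continuousWithinAt

lemma integral_eq_auxG (m : ℕ) {r : ℝ} (hr : 0 ≤ r) :
    ∫ s in (0:ℝ)..r, s * (-Real.log s) ^ m = auxG m r := by
  have h := intervalIntegral.integral_eq_sub_of_hasDeriv_right_of_le hr
    (auxG_continuousOn m)
    (fun x hx => (auxG_hasDerivAt m hx.1).hasDerivWithinAt)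
    (((integrand_continuousOn m (b := r))).intervalIntegrable_of_Icc hr)
  rw [h, auxG_zero, sub_zero]

lemma auxG_closed (m : ℕ) (r : ℝ) :
    auxG m r = r ^ 2 * ∑ j ∈ Finset.range (m+1),
      ((m.factorial : ℝ) / j.factorial * 2 ^ j / 2 ^ (m+1)) * (-Real.log r) ^ j := by
  induction m with
  | zero => simp [auxG]; ring
  | succ m ih =>
    have hs : ∑ j ∈ Finset.range (m+1),
        (((m+1).factorial : ℝ) / j.factorial * 2 ^ j / 2 ^ (m+1+1)) * (-Real.log r) ^ j
        = ((m : ℝ) + 1) / 2 * ∑ j ∈ Finset.range (m+1),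
          ((m.factorial : ℝ) / j.factorial * 2 ^ j / 2 ^ (m+1)) * (-Real.log r) ^ j := by
      rw [Finset.mul_sum]
      refine Finset.sum_congr rfl fun j _ => ?_
      rw [Nat.factorial_succ]
      push_cast
      rw [show (2:ℝ) ^ (m+1+1) = 2 ^ (m+1) * 2 from pow_succ 2 (m+1)]
      field_simp
    have htop : (((m+1).factorial : ℝ) / ((m+1).factorial) * 2 ^ (m+1) / 2 ^ (m+1+1)) = 1/2 := by
      rw [div_self (by positivity : ((m+1).factorial : ℝ) ≠ 0), one_mul,
        pow_succ 2 (m+1), ← div_div, div_self (by positivity : ((2:ℝ)^(m+1)) ≠ 0)]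
    show r ^ 2 * (-Real.log r) ^ (m+1) / 2 + ((m : ℝ) + 1) / 2 * auxG m r = _
    conv_rhs => rw [Finset.sum_range_succ]
    rw [ih, hs, htop]
    ring

lemma coefA_id_succ (n k : ℕ) (hk : 1 ≤ k) :
    2 * coefA n k + ((k : ℝ) + 1) * coefA n (k+1)
      = 2 * (-2:ℝ) ^ k * (((n-1).factorial : ℝ) / k.factorial) := by
  obtain ⟨j, rfl⟩ : ∃ j, k = j + 1 := ⟨k - 1, by omega⟩
  simp only [coefA, if_neg (Nat.succ_ne_zero _), Nat.add_sub_cancel]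
  rw [Nat.factorial_succ (j+1), Nat.factorial_succ j]
  push_cast
  have h1 : (j.factorial : ℝ) ≠ 0 := by positivity
  field_simp
  ring

lemma coefA_id_zero (n : ℕ) (hn : 1 ≤ n) :
    2 * coefA n 0 + ((0 : ℝ) + 1) * coefA n 1
      = 2 * (-2:ℝ) ^ 0 * (((n-1).factorial : ℝ) / Nat.factorial 0) := by
  obtain ⟨p, rfl⟩ : ∃ p, n = p + 1 := ⟨n - 1, by omega⟩
  simp only [coefA, Nat.add_sub_cancel]
  norm_num [Nat.factorial_succ]
  ring

lemma coefA_id_top (m : ℕ) (hm : 1 ≤ m) :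
    2 * coefA (m+1) m = 2 * (-2:ℝ) ^ m * ((m.factorial : ℝ) / m.factorial) := by
  obtain ⟨j, rfl⟩ : ∃ j, m = j + 1 := ⟨m - 1, by omega⟩
  simp only [coefA, if_neg (Nat.succ_ne_zero _), Nat.add_sub_cancel]
  rw [div_self (by positivity : (((j+1).factorial : ℝ)) ≠ 0)]
  rw [Nat.factorial_succ (j+1), Nat.factorial_succ j]
  push_cast
  have h1 : (j.factorial : ℝ) ≠ 0 := by positivity
  field_simp
  ring

lemma polyid (m : ℕ) (hm : 1 ≤ m) (x : ℝ) :
    2 * (∑ k ∈ Finset.range (m+1), coefA (m+1) k * x ^ k)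
      + ∑ k ∈ Finset.range (m+1), coefA (m+1) k * ((k : ℝ) * x ^ (k-1))
    = ∑ k ∈ Finset.range (m+1), (2 * (-2:ℝ) ^ k * ((m.factorial : ℝ) / k.factorial)) * x ^ k := by
  have h2 : ∑ k ∈ Finset.range (m+1), coefA (m+1) k * ((k : ℝ) * x ^ (k-1))
      = ∑ k ∈ Finset.range m, ((k : ℝ) + 1) * coefA (m+1) (k+1) * x ^ k := by
    rw [Finset.sum_range_succ']
    simp only [Nat.cast_zero, zero_mul, mul_zero, add_zero, Nat.add_sub_cancel]
    refine Finset.sum_congr rfl fun k _ => ?_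
    push_cast
    ring
  have h1 : 2 * ∑ k ∈ Finset.range (m+1), coefA (m+1) k * x ^ k
      = (∑ k ∈ Finset.range m, 2 * coefA (m+1) k * x ^ k) + 2 * coefA (m+1) m * x ^ m := by
    rw [Finset.sum_range_succ, mul_add, Finset.mul_sum]
    simp only [mul_assoc]
  rw [h1, h2, Finset.sum_range_succ
    (fun k => (2 * (-2:ℝ) ^ k * ((m.factorial : ℝ) / k.factorial)) * x ^ k)]
  have hmid : (∑ k ∈ Finset.range m, 2 * coefA (m+1) k * x ^ k)
      + ∑ k ∈ Finset.range m, ((k : ℝ) + 1) * coefA (m+1) (k+1) * x ^ k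
      = ∑ k ∈ Finset.range m, (2 * (-2:ℝ) ^ k * ((m.factorial : ℝ) / k.factorial)) * x ^ k := by
    rw [← Finset.sum_add_distrib]
    refine Finset.sum_congr rfl fun k _ => ?_
    have key : 2 * coefA (m+1) k + ((k : ℝ) + 1) * coefA (m+1) (k+1)
        = 2 * (-2:ℝ) ^ k * ((m.factorial : ℝ) / k.factorial) := by
      rcases Nat.eq_zero_or_pos k with rfl | hk
      · have := coefA_id_zero (m+1) (by omega)
        simp only [Nat.add_sub_cancel] at this
        simpa using this
      · have := coefA_id_succ (m+1) k hk
        simpa only [Nat.add_sub_cancel] using this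
    calc 2 * coefA (m+1) k * x ^ k + ((k : ℝ) + 1) * coefA (m+1) (k+1) * x ^ k
        = (2 * coefA (m+1) k + ((k : ℝ) + 1) * coefA (m+1) (k+1)) * x ^ k := by ring
      _ = _ := by rw [key]
  rw [coefA_id_top m hm, ← hmid]
  ring

lemma hFun_hasDerivAt (m : ℕ) (hm : 1 ≤ m) {r : ℝ} (hr : 0 < r) :
    HasDerivAt (hFun (m+1))
      (r * ∑ k ∈ Finset.range (m+1),
        (2 * (-2:ℝ) ^ k * ((m.factorial : ℝ) / k.factorial)) * (Real.log r) ^ k) r := by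
  have hP : HasDerivAt (fun x : ℝ => ∑ k ∈ Finset.range (m+1), coefA (m+1) k * x ^ k)
      (∑ k ∈ Finset.range (m+1), coefA (m+1) k * ((k : ℝ) * (Real.log r) ^ (k-1)))
      (Real.log r) :=
    HasDerivAt.fun_sum fun k _ => (hasDerivAt_pow k _).const_mul _
  have h := (hasDerivAt_pow 2 r).mul (hP.comp r (Real.hasDerivAt_log hr.ne'))
  have heq : (2 * r ^ 1) * (∑ k ∈ Finset.range (m+1), coefA (m+1) k * (Real.log r) ^ k)
      + r ^ 2 * ((∑ k ∈ Finset.range (m+1), coefA (m+1) k * ((k : ℝ) * (Real.log r) ^ (k-1))) * r⁻¹)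
      = r * ∑ k ∈ Finset.range (m+1),
        (2 * (-2:ℝ) ^ k * ((m.factorial : ℝ) / k.factorial)) * (Real.log r) ^ k := by
    rw [← polyid m hm (Real.log r)]
    field_simp
  rw [← heq]
  exact h

/-- `h_n'(r) = (2^{n+1}/r) ∫₀^r s(-log s)^{n-1} ds > 0` on `(0,1)`, so `h_n` is strictly
increasing on `(0,1)`. -/
theorem hFun_deriv_pos (n : ℕ) (hn : 2 ≤ n) :
    (∀ r ∈ Set.Ioo (0 : ℝ) 1,
      deriv (hFun n) r = (2 ^ (n + 1) / r) * ∫ s in (0 : ℝ)..r, s * (-Real.log s) ^ (n - 1) ∧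
      0 < deriv (hFun n) r) ∧
    StrictMonoOn (hFun n) (Set.Ioo 0 1) := by
  obtain ⟨m, rfl⟩ : ∃ m, n = m + 1 := ⟨n - 1, by omega⟩
  have hm : 1 ≤ m := by omega
  have key : ∀ r ∈ Set.Ioo (0 : ℝ) 1,
      deriv (hFun (m+1)) r
        = (2 ^ (m+1+1) / r) * ∫ s in (0:ℝ)..r, s * (-Real.log s) ^ (m+1-1) ∧
      0 < deriv (hFun (m+1)) r := by
    rintro r ⟨hr0, hr1⟩
    have hL : 0 < -Real.log r := by
      have := Real.log_neg hr0 hr1; linarith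
    have hd := (hFun_hasDerivAt m hm hr0).deriv
    have hint : ∫ s in (0:ℝ)..r, s * (-Real.log s) ^ (m+1-1) = auxG m r := by
      simpa using integral_eq_auxG m hr0.le
    have hterm : ∀ k, (2 * (-2:ℝ) ^ k * ((m.factorial : ℝ) / k.factorial)) * (Real.log r) ^ k
        = 2 * 2 ^ k * ((m.factorial : ℝ) / k.factorial) * (-Real.log r) ^ k := by
      intro k
      rw [show (2 * (-2:ℝ) ^ k * ((m.factorial : ℝ) / k.factorial)) * (Real.log r) ^ k
          = 2 * ((m.factorial : ℝ) / k.factorial) * ((-2:ℝ) ^ k * (Real.log r) ^ k) by ring,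
        ← mul_pow, show (-2:ℝ) * Real.log r = 2 * (-Real.log r) by ring, mul_pow]
      ring
    have hpos : 0 < deriv (hFun (m+1)) r := by
      rw [hd]
      refine mul_pos hr0 (Finset.sum_pos (fun k _ => ?_) ⟨0, Finset.mem_range.2 (by omega)⟩)
      rw [hterm k]
      have h1 : (0:ℝ) < (m.factorial : ℝ) / k.factorial := by positivity
      have h2 : (0:ℝ) < (-Real.log r) ^ k := pow_pos hL k
      positivity
    refine ⟨?_, hpos⟩
    rw [hd, hint, auxG_closed]
    rw [Finset.mul_sum]
    rw [show (2:ℝ) ^ (m+1+1) / r * (r ^ 2 * ∑ j ∈ Finset.range (m+1),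
        ((m.factorial : ℝ) / j.factorial * 2 ^ j / 2 ^ (m+1)) * (-Real.log r) ^ j)
        = ∑ j ∈ Finset.range (m+1),
          r * ((2:ℝ) ^ (m+1+1) / 2 ^ (m+1) * ((m.factorial : ℝ) / j.factorial * 2 ^ j)
            * (-Real.log r) ^ j) by
      rw [Finset.mul_sum, Finset.mul_sum]
      refine Finset.sum_congr rfl fun j _ => ?_
      field_simp]
    refine Finset.sum_congr rfl fun k _ => ?_
    rw [hterm k]
    rw [show (2:ℝ) ^ (m+1+1) = 2 ^ (m+1) * 2 from pow_succ 2 (m+1),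
      mul_comm ((2:ℝ)^(m+1)) 2, mul_div_assoc, div_self (by positivity : ((2:ℝ)^(m+1)) ≠ 0)]
    ring
  refine ⟨key, ?_⟩
  have hcont : ContinuousOn (hFun (m+1)) (Set.Ioo 0 1) := fun x hx =>
    ((hFun_hasDerivAt m hm hx.1).continuousAt).continuousWithinAt
  exact strictMonoOn_of_deriv_pos (convex_Ioo 0 1) hcont
    (fun x hx => by
      rw [interior_Ioo] at hx
      exact (key x hx).2)
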